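/- Let P be a poset with least element 0 and Z(P)^× ≠ ∅ satisfying the ascending chain condition for annihilators. Then the number of annihilator prime ideals of P equals the clique number of the zero-divisor graph Γ(P), i.e., |Ann(P)| = ω(P). -/

import Mathlib

/-- `L(x,y) = {z : z ≤ x ∧ z ≤ y}`, where the least element `0` of the poset is `⊥`. -/
def LSet (P : Type*) [PartialOrder P] [OrderBot P] (x y : P) : Set P := {z | z ≤ x ∧ z ≤ y}

theorem LSet_comm (P : Type*) [PartialOrder P] [OrderBot P] (x y : P) :
    LSet P x y = LSet P y x := by
  ext z; exact ⟨fun h => ⟨h.2, h.1⟩, fun h => ⟨h.2, h.1⟩⟩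

/-- The annihilator of `x`: `ann(x) = {y : L(x,y) = {0}}`. -/
def ann (P : Type*) [PartialOrder P] [OrderBot P] (x : P) : Set P := {y | LSet P x y = {⊥}}

theorem mem_ann_comm (P : Type*) [PartialOrder P] [OrderBot P] (x y : P) :
    y ∈ ann P x ↔ x ∈ ann P y := by
  simp only [ann, Set.mem_setOf_eq, LSet_comm P x y]

/-- The set `Z(P)^× = Z(P) \ {0}` of nonzero zero-divisors of `P`. -/
def ZDivX (P : Type*) [PartialOrder P] [OrderBot P] : Set P :=
  {x | x ≠ ⊥ ∧ ∃ y : P, y ≠ ⊥ ∧ LSet P x y = {⊥}}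

/-- The zero-divisor graph `Γ(P)` on `Z(P)^×`. -/
def zdGraph (P : Type*) [PartialOrder P] [OrderBot P] : SimpleGraph (ZDivX P) where
  Adj a b := (a : P) ≠ (b : P) ∧ LSet P a b = {⊥}
  symm := by
    constructor
    rintro a b ⟨h1, h2⟩
    exact ⟨fun h => h1 h.symm, by rw [LSet_comm]; exact h2⟩
  loopless := by constructor; rintro a ⟨h1, _⟩; exact h1 rfl

/-- The equivalence `x ∼ y ↔ ann(x) = ann(y)` on `Z(P)^×`. -/
def annSetoid (P : Type*) [PartialOrder P] [OrderBot P] : Setoid (ZDivX P) where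
  r a b := ann P a = ann P b
  iseqv := ⟨fun _ => rfl, Eq.symm, Eq.trans⟩

/-- The reduced zero-divisor graph `Γ_E(P)`, on equivalence classes of `Z(P)^×`. -/
def redGraph (P : Type*) [PartialOrder P] [OrderBot P] :
    SimpleGraph (Quotient (annSetoid P)) where
  Adj := Quotient.lift₂ (fun a b => LSet P (a : P) (b : P) = {⊥}) (by
    intro a b a' b' ha hb
    have ha' : ann P (a : P) = ann P (a' : P) := ha
    have hb' : ann P (b : P) = ann P (b' : P) := hb
    apply propext
    constructor
    · intro h
      have h1 : (b : P) ∈ ann P (a : P) := h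
      rw [ha', mem_ann_comm, hb', mem_ann_comm] at h1
      exact h1
    · intro h
      have h1 : (b' : P) ∈ ann P (a' : P) := h
      rw [← ha', mem_ann_comm, ← hb', mem_ann_comm] at h1
      exact h1)
  symm := by
    constructor
    intro x y
    refine Quotient.inductionOn₂ x y ?_
    intro a b h
    have h' : LSet P (a : P) (b : P) = {⊥} := h
    show LSet P (b : P) (a : P) = {⊥}
    rw [LSet_comm]; exact h'
  loopless := by
    constructor
    intro x
    refine Quotient.inductionOn x ?_
    intro a h
    have h' : LSet P (a : P) (a : P) = {⊥} := h
    have hm : (a : P) ∈ LSet P (a : P) (a : P) := ⟨le_refl _, le_refl _⟩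
    rw [h'] at hm
    exact a.2.1 hm
/-- `I` is an ideal of the poset `P`: a nonempty downward-closed subset. -/
def IsIdeal (P : Type*) [PartialOrder P] [OrderBot P] (I : Set P) : Prop :=
  I.Nonempty ∧ ∀ x ∈ I, ∀ y : P, y ≤ x → y ∈ I

/-- `I` is a prime ideal of the poset `P`: a proper ideal such that
`L(x,y) ⊆ I` implies `x ∈ I` or `y ∈ I`. -/
def IsPrimeIdeal (P : Type*) [PartialOrder P] [OrderBot P] (I : Set P) : Prop :=
  IsIdeal P I ∧ I ≠ Set.univ ∧ ∀ x y : P, LSet P x y ⊆ I → x ∈ I ∨ y ∈ I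

/-- The family `𝔄 = {ann(x) : x ∈ P \ {0}}`. -/
def AnnFam (P : Type*) [PartialOrder P] [OrderBot P] : Set (Set P) :=
  {I | ∃ x : P, x ≠ ⊥ ∧ ann P x = I}

/-- `Ann(P)`, the set of annihilator prime ideals of `P`. -/
def AnnPrimes (P : Type*) [PartialOrder P] [OrderBot P] : Set (Set P) :=
  {I | IsPrimeIdeal P I ∧ ∃ x : P, ann P x = I}

/-- `P` satisfies the ACC for annihilators: every nonempty subfamily of `𝔄` has a
maximal element. -/
def ACCAnn (P : Type*) [PartialOrder P] [OrderBot P] : Prop :=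
  ∀ S : Set (Set P), S ⊆ AnnFam P → S.Nonempty → ∃ I ∈ S, ∀ J ∈ S, I ⊆ J → I = J

section Aux

variable {P : Type*} [PartialOrder P] [OrderBot P]

lemma bot_mem_LSet (x y : P) : ⊥ ∈ LSet P x y := ⟨bot_le, bot_le⟩

lemma LSet_eq_bot_of_subset {x y : P} (h : LSet P x y ⊆ {⊥}) : LSet P x y = {⊥} :=
  h.antisymm (Set.singleton_subset_iff.mpr (bot_mem_LSet x y))

lemma bot_mem_ann (x : P) : ⊥ ∈ ann P x := by
  show LSet P x ⊥ = {⊥}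
  apply LSet_eq_bot_of_subset
  rintro z ⟨-, hz⟩
  exact Set.mem_singleton_iff.mpr (le_bot_iff.mp hz)

lemma ann_downclosed {x y y' : P} (h : y ∈ ann P x) (h' : y' ≤ y) : y' ∈ ann P x := by
  have h : LSet P x y = {⊥} := h
  exact LSet_eq_bot_of_subset (by rw [← h]; exact fun z ⟨h1, h2⟩ => ⟨h1, h2.trans h'⟩)

lemma ann_anti {x x' : P} (h : x' ≤ x) : ann P x ⊆ ann P x' := by
  intro a ha
  have ha : LSet P x a = {⊥} := ha
  exact LSet_eq_bot_of_subset (by rw [← ha]; exact fun z ⟨h1, h2⟩ => ⟨h1.trans h, h2⟩)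

lemma self_mem_ann {x : P} (h : x ∈ ann P x) : x = ⊥ := by
  have h : LSet P x x = {⊥} := h
  have hx : x ∈ LSet P x x := ⟨le_rfl, le_rfl⟩
  rw [h] at hx
  exact hx

lemma ann_bot : ann P (⊥ : P) = Set.univ := by
  apply Set.eq_univ_of_forall
  intro y
  show LSet P ⊥ y = {⊥}
  apply LSet_eq_bot_of_subset
  rintro z ⟨hz, -⟩
  exact Set.mem_singleton_iff.mpr (le_bot_iff.mp hz)

lemma ann_isIdeal (x : P) : IsIdeal P (ann P x) :=
  ⟨⟨⊥, bot_mem_ann x⟩, fun a ha b hb => ann_downclosed ha hb⟩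

/-- A maximal annihilator (of a nonzero element) is prime. -/
lemma maximal_ann_isPrime {m : P} (hm : m ≠ ⊥)
    (hmax : ∀ z : P, z ≠ ⊥ → ann P m ⊆ ann P z → ann P m = ann P z) :
    IsPrimeIdeal P (ann P m) := by
  refine ⟨ann_isIdeal m, ?_, ?_⟩
  · intro h
    exact hm (self_mem_ann (h ▸ Set.mem_univ m))
  · intro x y hsub
    by_contra hc
    push_neg at hc
    obtain ⟨hx, hy⟩ := hc
    have hux : ∃ u : P, u ≠ ⊥ ∧ u ≤ x ∧ u ≤ m := by
      by_contra h
      push_neg at h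
      apply hx
      show LSet P m x = {⊥}
      apply LSet_eq_bot_of_subset
      rintro z ⟨h1, h2⟩
      by_contra hz
      exact (h z (fun hb => hz (Set.mem_singleton_iff.mpr hb)) h2) h1
    have hvy : ∃ v : P, v ≠ ⊥ ∧ v ≤ y ∧ v ≤ m := by
      by_contra h
      push_neg at h
      apply hy
      show LSet P m y = {⊥}
      apply LSet_eq_bot_of_subset
      rintro z ⟨h1, h2⟩
      by_contra hz
      exact (h z (fun hb => hz (Set.mem_singleton_iff.mpr hb)) h2) h1
    obtain ⟨u, hu, hux', hum⟩ := hux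
    obtain ⟨v, hv, hvy', hvm⟩ := hvy
    have heu : ann P m = ann P u := hmax u hu (ann_anti hum)
    have hev : ann P m = ann P v := hmax v hv (ann_anti hvm)
    -- L(u,v) ⊆ L(x,y) ⊆ ann m = ann u, hence L(u,v) = {⊥}
    have huv : LSet P u v = {⊥} := by
      apply LSet_eq_bot_of_subset
      rintro z ⟨h1, h2⟩
      have hz : z ∈ ann P m := hsub ⟨h1.trans hux', h2.trans hvy'⟩
      rw [heu] at hz
      have hz : LSet P u z = {⊥} := hz
      have : z ∈ LSet P u z := ⟨h1, le_rfl⟩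
      rw [hz] at this
      exact this
    have : v ∈ ann P u := huv
    rw [← heu, hev] at this
    exact hv (self_mem_ann this)

/-- Under ACC there is a maximal annihilator above any `ann x`, `x ≠ ⊥`. -/
lemma exists_maximal_ann (hacc : ACCAnn P) {x : P} (hx : x ≠ ⊥) :
    ∃ m : P, m ≠ ⊥ ∧ ann P x ⊆ ann P m ∧
      ∀ z : P, z ≠ ⊥ → ann P m ⊆ ann P z → ann P m = ann P z := by
  obtain ⟨I, hI, hImax⟩ := hacc {I | ∃ m : P, m ≠ ⊥ ∧ ann P m = I ∧ ann P x ⊆ I}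
    (fun I hI => ⟨hI.choose, hI.choose_spec.1, hI.choose_spec.2.1⟩)
    ⟨ann P x, x, hx, rfl, subset_rfl⟩
  obtain ⟨m, hm, rfl, hxm⟩ := hI
  exact ⟨m, hm, hxm, fun z hz hsub =>
    hImax (ann P z) ⟨z, hz, rfl, hxm.trans hsub⟩ hsub⟩

/-- Distinct annihilator primes have `L(x,y) = {⊥}`. -/
lemma primes_adjacent {x y : P} (hp : IsPrimeIdeal P (ann P x)) (hq : IsPrimeIdeal P (ann P y))
    (hne : ann P x ≠ ann P y) : LSet P x y = {⊥} := by
  apply LSet_eq_bot_of_subset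
  rintro z ⟨hzx, hzy⟩
  by_contra hz
  have hz : z ≠ ⊥ := fun h => hz (Set.mem_singleton_iff.mpr h)
  by_cases hsub : ann P y ⊆ ann P x
  · -- there is a ∈ ann x \ ann y
    have : ¬ ann P x ⊆ ann P y := fun h => hne (h.antisymm hsub)
    obtain ⟨a, hax, hay⟩ := Set.not_subset.mp this
    -- L(z,a) ⊆ L(x,a) = {⊥} ⊆ ann y
    have hxa : LSet P x a = {⊥} := hax
    have hza : LSet P z a ⊆ ann P y := by
      intro w hw
      have : w ∈ LSet P x a := ⟨hw.1.trans hzx, hw.2⟩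
      rw [hxa] at this
      rw [Set.mem_singleton_iff.mp this]
      exact bot_mem_ann y
    rcases hq.2.2 z a hza with h | h
    · have h : LSet P y z = {⊥} := h
      have : z ∈ LSet P y z := ⟨hzy, le_rfl⟩
      rw [h] at this
      exact hz this
    · exact hay h
  · obtain ⟨b, hby, hbx⟩ := Set.not_subset.mp hsub
    have hyb : LSet P y b = {⊥} := hby
    have hzb : LSet P z b ⊆ ann P x := by
      intro w hw
      have : w ∈ LSet P y b := ⟨hw.1.trans hzy, hw.2⟩
      rw [hyb] at this
      rw [Set.mem_singleton_iff.mp this]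
      exact bot_mem_ann x
    rcases hp.2.2 z b hzb with h | h
    · have h : LSet P x z = {⊥} := h
      have : z ∈ LSet P x z := ⟨hzx, le_rfl⟩
      rw [h] at this
      exact hz this
    · exact hbx h

/-- If `ann x` is prime and `Z(P)ˣ ≠ ∅`, then `x` is a nonzero zero-divisor. -/
lemma mem_zdiv_of_prime (hZ : (ZDivX P).Nonempty) {x : P} (hp : IsPrimeIdeal P (ann P x)) :
    x ∈ ZDivX P := by
  have hxb : x ≠ ⊥ := by
    rintro rfl
    exact hp.2.1 ann_bot
  obtain ⟨a, ha, b, hb, hab⟩ := hZ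
  have hsub : LSet P a b ⊆ ann P x := by
    rw [hab]
    exact Set.singleton_subset_iff.mpr (bot_mem_ann x)
  refine ⟨hxb, ?_⟩
  rcases hp.2.2 a b hsub with h | h
  · exact ⟨a, ha, h⟩
  · exact ⟨b, hb, h⟩

end Aux
/-- If `P` satisfies the ACC for annihilators, then `|Ann(P)| = ω(P)`, where `ω(P)` is
the least upper bound of the sizes of the cliques of `Γ(P)`. -/
theorem stmt16 (P : Type*) [PartialOrder P] [OrderBot P] (hZ : (ZDivX P).Nonempty)
    (hacc : ACCAnn P) :
    (AnnPrimes P).encard =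
      ⨆ (s : Set (ZDivX P)) (_ : (zdGraph P).IsClique s), s.encard := by
  classical
  refine le_antisymm ?_ ?_
  · -- |Ann(P)| ≤ ω(P): choose a representative vertex for each annihilator prime.
    have hrep : ∀ I ∈ AnnPrimes P, ∃ a : ZDivX P, ann P (a : P) = I := by
      rintro I ⟨hprime, x, rfl⟩
      exact ⟨⟨x, mem_zdiv_of_prime hZ hprime⟩, rfl⟩
    set F : Set P → ZDivX P := fun I =>
      if h : I ∈ AnnPrimes P then Classical.choose (hrep I h) else ⟨hZ.choose, hZ.choose_spec⟩
      with hF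
    have hFspec : ∀ I ∈ AnnPrimes P, ann P ((F I : ZDivX P) : P) = I := by
      intro I hI
      simp only [hF, dif_pos hI]
      exact Classical.choose_spec (hrep I hI)
    have hinj : Set.InjOn F (AnnPrimes P) := by
      intro I hI J hJ hIJ
      rw [← hFspec I hI, ← hFspec J hJ, hIJ]
    have hclique : (zdGraph P).IsClique (F '' AnnPrimes P) := by
      rintro a ⟨I, hI, rfl⟩ b ⟨J, hJ, rfl⟩ hab
      have hIJ : I ≠ J := fun h => hab (by rw [h])
      have hco : ((F I : ZDivX P) : P) ≠ ((F J : ZDivX P) : P) := by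
        intro h
        apply hIJ
        rw [← hFspec I hI, ← hFspec J hJ, h]
      refine ⟨hco, ?_⟩
      have hpI : IsPrimeIdeal P (ann P ((F I : ZDivX P) : P)) := by
        rw [hFspec I hI]; exact hI.1
      have hpJ : IsPrimeIdeal P (ann P ((F J : ZDivX P) : P)) := by
        rw [hFspec J hJ]; exact hJ.1
      exact primes_adjacent hpI hpJ (by rw [hFspec I hI, hFspec J hJ]; exact hIJ)
    calc (AnnPrimes P).encard = (F '' AnnPrimes P).encard := (hinj.encard_image).symm
      _ ≤ ⨆ (s : Set (ZDivX P)) (_ : (zdGraph P).IsClique s), s.encard :=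
          le_iSup_of_le (F '' AnnPrimes P)
            (le_iSup (fun _ : (zdGraph P).IsClique (F '' AnnPrimes P) =>
              (F '' AnnPrimes P).encard) hclique)
  · -- ω(P) ≤ |Ann(P)|: map each vertex of a clique to a maximal annihilator above it.
    refine iSup_le fun s => iSup_le fun hs => ?_
    set G : ZDivX P → Set P := fun a =>
      ann P (Classical.choose (exists_maximal_ann hacc a.2.1)) with hG
    have hGspec : ∀ a : ZDivX P,
        Classical.choose (exists_maximal_ann hacc a.2.1) ≠ ⊥ ∧
        ann P (a : P) ⊆ G a ∧
        ∀ z : P, z ≠ ⊥ → G a ⊆ ann P z → G a = ann P z := fun a =>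
      Classical.choose_spec (exists_maximal_ann hacc a.2.1)
    have himg : G '' s ⊆ AnnPrimes P := by
      rintro _ ⟨a, _, rfl⟩
      exact ⟨maximal_ann_isPrime (hGspec a).1 (hGspec a).2.2,
        Classical.choose (exists_maximal_ann hacc a.2.1), rfl⟩
    have hinj : Set.InjOn G s := by
      intro a ha b hb hab
      by_contra hne
      obtain ⟨hco, hL⟩ := hs ha hb hne
      -- b ∈ ann a ⊆ G a = G b, and ann b ⊆ G b, so the generator of G b kills itself
      have hbGa : (b : P) ∈ G a := (hGspec a).2.1 hL
      rw [hab] at hbGa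
      -- hbGa : b ∈ ann (m b), i.e. m b ∈ ann b ⊆ G b = ann (m b)
      have hmb : Classical.choose (exists_maximal_ann hacc b.2.1) ∈ ann P (b : P) :=
        (mem_ann_comm P _ _).mp hbGa
      have : Classical.choose (exists_maximal_ann hacc b.2.1) ∈ G b := (hGspec b).2.1 hmb
      exact (hGspec b).1 (self_mem_ann this)
    calc s.encard = (G '' s).encard := (hinj.encard_image).symm
      _ ≤ (AnnPrimes P).encard := Set.encard_mono himg
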